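/- In G = ℤ² ⋊ ℤ/2ℤ (swap action) with a = ((1,0),0), t = ((0,0),1), a word over A = {a, a⁻¹, t, t⁻¹} is geodesic if and only if it belongs to the language L = { aˣ : x ∈ ℤ } ∪ { aˣ t aʸ : x, y ∈ ℤ } ∪ { a^{x₁} t aʸ t a^{x₂} : x₁, x₂, y ∈ ℤ, y ≠ 0, x₁·x₂ ≥ 0 }, where aˣ for negative x means (a⁻¹)^{|x|} and trivial powers are omitted. -/

import Mathlib

/-- The coordinate-swapping automorphism of ℤ². -/
def swapAut : MulAut (Multiplicative (ℤ × ℤ)) :=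
  AddEquiv.toMultiplicative (AddEquiv.prodComm : (ℤ × ℤ) ≃+ (ℤ × ℤ))

lemma swapAut_sq : swapAut ^ 2 = 1 := by
  refine MulEquiv.ext fun z => ?_
  show swapAut (swapAut z) = z
  cases z
  rfl

/-- The action of ℤ/2ℤ on ℤ² by swapping the two coordinates. -/
def swapAction : Multiplicative (ZMod 2) →* MulAut (Multiplicative (ℤ × ℤ)) where
  toFun ε := swapAut ^ (Multiplicative.toAdd ε).val
  map_one' := rfl
  map_mul' x y := by
    show swapAut ^ _ = swapAut ^ _ * swapAut ^ _
    rw [← pow_add]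
    have key : ∀ m n : ℕ, m % 2 = n % 2 → swapAut ^ m = swapAut ^ n := by
      intro m n h
      rw [← Nat.div_add_mod m 2, ← Nat.div_add_mod n 2, h, pow_add, pow_add,
        pow_mul, pow_mul, swapAut_sq]
      simp
    apply key
    have := ZMod.val_add (Multiplicative.toAdd x) (Multiplicative.toAdd y)
    simp only [toAdd_mul] at *
    omega

/-- The group G = ℤ² ⋊ ℤ/2ℤ with the swap action. -/
abbrev GG := SemidirectProduct (Multiplicative (ℤ × ℤ)) (Multiplicative (ZMod 2)) swapAction

/-- The generator a = ((1,0), 0). -/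
def ga : GG := SemidirectProduct.inl (Multiplicative.ofAdd ((1, 0) : ℤ × ℤ))

/-- The generator t = ((0,0), 1). -/
def gt : GG := SemidirectProduct.inr (Multiplicative.ofAdd (1 : ZMod 2))

/-- The element ((x,y), ε) of G. -/
def el (x y : ℤ) (ε : ZMod 2) : GG :=
  ⟨Multiplicative.ofAdd (x, y), Multiplicative.ofAdd ε⟩

/-- The generating set A = {a, a⁻¹, t, t⁻¹}. -/
def GenSet : Set GG := {ga, ga⁻¹, gt, gt⁻¹}

/-- `w` is a word over the alphabet A. -/
def IsWord (w : List GG) : Prop := ∀ x ∈ w, x ∈ GenSet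

/-- `w` is a word over A representing the group element `g` (via its product). -/
def Represents (w : List GG) (g : GG) : Prop := IsWord w ∧ w.prod = g

/-- The word length of `g`: minimal length of a word over A representing `g`. -/
noncomputable def wordLength (g : GG) : ℕ :=
  sInf {n | ∃ w : List GG, Represents w g ∧ w.length = n}

/-- A word over A is geodesic if no strictly shorter word over A represents
the same element. -/
def IsGeodesic (w : List GG) : Prop :=
  IsWord w ∧ ∀ v : List GG, IsWord v → v.prod = w.prod → w.length ≤ v.length

open Classical in
/-- The number of t-letters of a word (occurrences of t and t⁻¹). -/
noncomputable def tCount (w : List GG) : ℕ :=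
  w.countP (fun x => decide (x = gt ∨ x = gt⁻¹))

/-- The word aˣ over A: x letters `a` if x ≥ 0, |x| letters `a⁻¹` if x < 0. -/
def apow (x : ℤ) : List GG :=
  if 0 ≤ x then List.replicate x.toNat ga else List.replicate (-x).toNat ga⁻¹

/-- The word metric on G with respect to A. -/
noncomputable def dA (g h : GG) : ℕ := wordLength (g⁻¹ * h)

/-- The point of G reached at time i along the word w (the endpoint if i
exceeds the length of w). -/
def pt (w : List GG) (i : ℕ) : GG := (w.take i).prod

/-- Words u and w synchronously k-fellow travel. -/
def FellowTravels (k : ℕ) (u w : List GG) : Prop :=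
  ∀ i : ℕ, dA (pt u i) (pt w i) ≤ k

/-- The language of all geodesic words over A. -/
def GeodLang : Set (List GG) :=
  {w | ∃ x : ℤ, w = apow x} ∪
  {w | ∃ x y : ℤ, w = apow x ++ [gt] ++ apow y} ∪
  {w | ∃ x₁ y x₂ : ℤ, y ≠ 0 ∧ x₁ * x₂ ≥ 0 ∧
    w = apow x₁ ++ [gt] ++ apow y ++ [gt] ++ apow x₂}

lemma el_mul₀ (x y x' y' : ℤ) (e : ZMod 2) : el x y 0 * el x' y' e = el (x+x') (y+y') e := by
  refine SemidirectProduct.ext ?_ ?_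
  · show Multiplicative.ofAdd (x,y) * swapAction (Multiplicative.ofAdd (0:ZMod 2)) (Multiplicative.ofAdd (x',y')) = Multiplicative.ofAdd (x+x',y+y')
    simp [swapAction]
    rfl
  · show Multiplicative.ofAdd (0:ZMod 2) * Multiplicative.ofAdd e = Multiplicative.ofAdd e
    simp
lemma el_mul₁ (x y x' y' : ℤ) (e : ZMod 2) : el x y 1 * el x' y' e = el (x+y') (y+x') (1+e) := by
  refine SemidirectProduct.ext ?_ ?_
  · show Multiplicative.ofAdd (x,y) * swapAction (Multiplicative.ofAdd (1:ZMod 2)) (Multiplicative.ofAdd (x',y')) = Multiplicative.ofAdd (x+y',y+x')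
    simp [swapAction, swapAut]
    rfl
  · rfl

lemma el_congr {x x' y y' : ℤ} {e e' : ZMod 2} (hx : x = x') (hy : y = y') (he : e = e') :
    el x y e = el x' y' e' := by subst hx; subst hy; subst he; rfl

lemma ga_el : ga = el 1 0 0 := rfl
lemma gt_el : gt = el 0 0 1 := rfl
lemma one_el : (1:GG) = el 0 0 0 := rfl

lemma gt_inv : gt⁻¹ = gt := by
  symm
  apply eq_inv_of_mul_eq_one_right
  rw [gt_el, el_mul₁, one_el]
  exact el_congr rfl rfl (by decide)

lemma ga_inv : ga⁻¹ = el (-1) 0 0 := by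
  apply inv_eq_of_mul_eq_one_right
  rw [ga_el, el_mul₀, one_el]
  exact el_congr (by ring) rfl rfl

lemma zmod2_cases (e : ZMod 2) : e = 0 ∨ e = 1 := by revert e; decide

lemma mem_gen {s : GG} (h : s ∈ GenSet) : s = ga ∨ s = ga⁻¹ ∨ s = gt := by
  simp only [GenSet, Set.mem_insert_iff, Set.mem_singleton_iff] at h
  rcases h with h | h | h | h
  · exact Or.inl h
  · exact Or.inr (Or.inl h)
  · exact Or.inr (Or.inr h)
  · rw [gt_inv] at h; exact Or.inr (Or.inr h)

def Xc (g : GG) : ℤ := (Multiplicative.toAdd g.left).1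
def Yc (g : GG) : ℤ := (Multiplicative.toAdd g.left).2
def Ec (g : GG) : ZMod 2 := Multiplicative.toAdd g.right

lemma el_eta (g : GG) : el (Xc g) (Yc g) (Ec g) = g := rfl

def cN (x y : ℤ) (e : ZMod 2) : ℕ :=
  x.natAbs + y.natAbs + (if e = 1 then 1 else if y = 0 then 0 else 2)

def Nm (g : GG) : ℕ := cN (Xc g) (Yc g) (Ec g)

lemma Nm_el (x y : ℤ) (e : ZMod 2) : Nm (el x y e) = cN x y e := rfl

lemma cN0 (x y : ℤ) : cN x y 0 = x.natAbs + y.natAbs + (if y = 0 then 0 else 2) := by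
  simp [cN]
lemma cN1 (x y : ℤ) : cN x y 1 = x.natAbs + y.natAbs + 1 := by simp [cN]

lemma ga_mul (x y : ℤ) (e : ZMod 2) : ga * el x y e = el (x+1) y e := by
  rw [ga_el, el_mul₀]; exact el_congr (by ring) (by ring) rfl
lemma gainv_mul (x y : ℤ) (e : ZMod 2) : ga⁻¹ * el x y e = el (x-1) y e := by
  rw [ga_inv, el_mul₀]; exact el_congr (by ring) (by ring) rfl
lemma gt_mul (x y : ℤ) (e : ZMod 2) : gt * el x y e = el y x (1+e) := by
  rw [gt_el, el_mul₁]; exact el_congr (by ring) (by ring) rfl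

lemma one_one : (1+1 : ZMod 2) = 0 := by decide
lemma one_zero : (1+0 : ZMod 2) = 1 := by decide

lemma Nm_mul_le {s : GG} (hs : s ∈ GenSet) (g : GG) : Nm (s * g) ≤ Nm g + 1 := by
  rw [← el_eta g]
  rcases zmod2_cases (Ec g) with he | he <;> rw [he] <;>
    rcases mem_gen hs with rfl | rfl | rfl <;>
    simp only [ga_mul, gainv_mul, gt_mul, one_one, one_zero, Nm_el, cN0, cN1] <;>
    (try split_ifs) <;> omega

lemma Nm_one : Nm 1 = 0 := by decide

lemma Nm_prod_le : ∀ w : List GG, IsWord w → Nm w.prod ≤ w.length := by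
  intro w
  induction w with
  | nil => intro _; simp [Nm_one]
  | cons s v ih =>
    intro hw
    have h1 := Nm_mul_le (hw s (by simp)) v.prod
    have h2 := ih (fun u hu => hw u (by simp [hu]))
    rw [List.prod_cons]
    simp only [List.length_cons]
    omega

/- apow lemmas -/
lemma apow_word (x : ℤ) : ∀ u ∈ apow x, u ∈ GenSet := by
  intro u hu
  unfold apow at hu
  split at hu <;> rw [List.eq_of_mem_replicate hu] <;> simp [GenSet]

lemma apow_length (x : ℤ) : (apow x).length = x.natAbs := by
  unfold apow; split <;> simp <;> omega

lemma ga_pow (n : ℕ) : ga ^ n = el n 0 0 := by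
  induction n with
  | zero => rw [pow_zero, one_el]; exact el_congr (by simp) rfl rfl
  | succ n ih =>
    rw [pow_succ, ih, ga_el, el_mul₀]
    exact el_congr (by push_cast; ring) (by ring) rfl

lemma gainv_pow (n : ℕ) : ga⁻¹ ^ n = el (-n) 0 0 := by
  induction n with
  | zero => rw [pow_zero, one_el]; exact el_congr (by simp) rfl rfl
  | succ n ih =>
    rw [pow_succ, ih, ga_inv, el_mul₀]
    exact el_congr (by push_cast; ring) (by ring) rfl

lemma apow_prod (x : ℤ) : (apow x).prod = el x 0 0 := by
  unfold apow
  split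
  · rw [List.prod_replicate, ga_pow]
    exact el_congr (by omega) rfl rfl
  · rw [List.prod_replicate, gainv_pow]
    exact el_congr (by omega) rfl rfl

lemma prod2 (x y : ℤ) : (apow x ++ [gt] ++ apow y).prod = el x y 1 := by
  rw [List.prod_append, List.prod_append, apow_prod, apow_prod, List.prod_singleton,
    gt_el, el_mul₀, el_mul₁]
  exact el_congr (by ring) (by ring) (by decide)

lemma prod3 (x y z : ℤ) :
    (apow x ++ [gt] ++ apow y ++ [gt] ++ apow z).prod = el (x+z) y 0 := by
  rw [List.prod_append, List.prod_append, prod2, List.prod_singleton, apow_prod,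
    gt_el, el_mul₁, one_one, el_mul₀]
  exact el_congr (by ring) (by ring) (by decide)

def cw (x y : ℤ) (e : ZMod 2) : List GG :=
  if e = 1 then apow x ++ [gt] ++ apow y
  else if y = 0 then apow x
  else apow x ++ [gt] ++ apow y ++ [gt]

lemma word_app {u v : List GG} (h1 : IsWord u) (h2 : IsWord v) : IsWord (u ++ v) :=
  fun x hx => (List.mem_append.mp hx).elim (h1 x) (h2 x)

lemma word_gt : IsWord [gt] := by
  intro x hx
  rw [List.mem_singleton.mp hx]
  simp [GenSet]

lemma cw_word (x y : ℤ) (e : ZMod 2) : IsWord (cw x y e) := by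
  unfold cw
  split_ifs
  · exact word_app (word_app (apow_word x) word_gt) (apow_word y)
  · exact apow_word x
  · exact word_app (word_app (word_app (apow_word x) word_gt) (apow_word y)) word_gt

lemma cw_prod (x y : ℤ) (e : ZMod 2) : (cw x y e).prod = el x y e := by
  unfold cw
  split_ifs with h1 h2
  · rw [prod2, h1]
  · rcases zmod2_cases e with rfl | rfl
    · rw [apow_prod, h2]
    · exact absurd rfl h1
  · rcases zmod2_cases e with rfl | rfl
    · rw [List.prod_append, prod2, List.prod_singleton, gt_el, el_mul₁]
      exact el_congr (by ring) (by ring) (by decide)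
    · exact absurd rfl h1

lemma cw_length (x y : ℤ) (e : ZMod 2) : (cw x y e).length = cN x y e := by
  unfold cw
  split_ifs with h1 h2 <;>
    simp [apow_length, cN, *] <;> omega

lemma geod_iff (w : List GG) (hw : IsWord w) :
    IsGeodesic w ↔ w.length = Nm w.prod := by
  constructor
  · rintro ⟨-, hmin⟩
    have h1 := Nm_prod_le w hw
    have h2 := hmin (cw (Xc w.prod) (Yc w.prod) (Ec w.prod)) (cw_word _ _ _)
      (by rw [cw_prod, el_eta])
    rw [cw_length] at h2
    exact le_antisymm h2 h1
  · intro h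
    refine ⟨hw, fun v hv hpv => ?_⟩
    rw [h, ← hpv]
    exact Nm_prod_le v hv

lemma lang_len (w : List GG) (hL : w ∈ GeodLang) : w.length = Nm w.prod := by
  simp only [GeodLang, Set.mem_union, Set.mem_setOf_eq] at hL
  rcases hL with (⟨x, rfl⟩ | ⟨x, y, rfl⟩) | ⟨x₁, y, x₂, hy, hsgn, rfl⟩
  · rw [apow_prod, apow_length, Nm_el, cN0]
    simp
  · rw [prod2, Nm_el, cN1]
    simp [apow_length]
    omega
  · rw [prod3, Nm_el, cN0, if_neg hy]
    have := mul_nonneg_iff.mp hsgn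
    simp [apow_length]
    omega

lemma consA {x : ℤ} (hx : 0 ≤ x) : ga :: apow x = apow (x+1) := by
  unfold apow
  rw [if_pos hx, if_pos (by omega)]
  rw [show (x+1).toNat = x.toNat + 1 by omega, List.replicate_succ]

lemma consAinv {x : ℤ} (hx : x ≤ 0) : ga⁻¹ :: apow x = apow (x-1) := by
  rcases eq_or_lt_of_le hx with rfl | h
  · show ga⁻¹ :: apow 0 = apow (0-1)
    norm_num [apow]
  · unfold apow
    rw [if_neg (by omega), if_neg (by omega),
      show (-(x-1)).toNat = (-x).toNat + 1 by omega, List.replicate_succ]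

lemma len_lang : ∀ w : List GG, IsWord w → w.length = Nm w.prod → w ∈ GeodLang := by
  intro w
  induction w with
  | nil =>
    intro _ _
    exact Or.inl (Or.inl ⟨0, by simp [apow]⟩)
  | cons s v ih =>
    intro hw h
    have hs : s ∈ GenSet := hw s (by simp)
    have hv : IsWord v := fun u hu => hw u (by simp [hu])
    have hlip := Nm_mul_le hs v.prod
    have hlow := Nm_prod_le v hv
    rw [List.prod_cons] at h
    simp only [List.length_cons] at h
    have hvlen : v.length = Nm v.prod := by omega
    have hmem := ih hv hvlen
    simp only [GeodLang, Set.mem_union, Set.mem_setOf_eq] at hmem ⊢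
    rcases hmem with (⟨x, rfl⟩ | ⟨x, y, rfl⟩) | ⟨x₁, y, x₂, hy, hsgn, rfl⟩
    · -- v = apow x
      rw [apow_prod, apow_length] at h hvlen
      rcases mem_gen hs with rfl | rfl | rfl
      · rw [ga_mul, Nm_el, cN0, if_pos rfl] at h
        have hx : 0 ≤ x := by omega
        exact Or.inl (Or.inl ⟨x+1, consA hx⟩)
      · rw [gainv_mul, Nm_el, cN0, if_pos rfl] at h
        have hx : x ≤ 0 := by omega
        exact Or.inl (Or.inl ⟨x-1, consAinv hx⟩)
      · refine Or.inl (Or.inr ⟨0, x, ?_⟩)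
        simp [apow]
    · -- v = apow x ++ [gt] ++ apow y
      rw [prod2] at h
      have hlen2 : (apow x ++ [gt] ++ apow y).length = x.natAbs + y.natAbs + 1 := by
        simp [apow_length]
        omega
      rcases mem_gen hs with rfl | rfl | rfl
      · rw [ga_mul, Nm_el, cN1, hlen2] at h
        have hx : 0 ≤ x := by omega
        refine Or.inl (Or.inr ⟨x+1, y, ?_⟩)
        rw [← consA hx]
        simp
      · rw [gainv_mul, Nm_el, cN1, hlen2] at h
        have hx : x ≤ 0 := by omega
        refine Or.inl (Or.inr ⟨x-1, y, ?_⟩)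
        rw [← consAinv hx]
        simp
      · rw [gt_mul, one_one, Nm_el, cN0, hlen2] at h
        have hx : x ≠ 0 := by
          intro h0
          rw [if_pos h0] at h
          omega
        refine Or.inr ⟨0, x, y, hx, by simp, ?_⟩
        simp [apow]
    · -- v = apow x₁ ++ [gt] ++ apow y ++ [gt] ++ apow x₂
      rw [prod3] at h
      have hlen3 : (apow x₁ ++ [gt] ++ apow y ++ [gt] ++ apow x₂).length
          = x₁.natAbs + y.natAbs + x₂.natAbs + 2 := by
        simp [apow_length]
        omega
      have hsgn' := mul_nonneg_iff.mp hsgn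
      rcases mem_gen hs with rfl | rfl | rfl
      · rw [ga_mul, Nm_el, cN0, if_neg hy, hlen3] at h
        have hx : 0 ≤ x₁ ∧ 0 ≤ x₂ := by rcases hsgn' with ⟨h1, h2⟩ | ⟨h1, h2⟩ <;> omega
        refine Or.inr ⟨x₁+1, y, x₂, hy, mul_nonneg (by omega) hx.2, ?_⟩
        rw [← consA hx.1]
        simp
      · rw [gainv_mul, Nm_el, cN0, if_neg hy, hlen3] at h
        have hx : x₁ ≤ 0 ∧ x₂ ≤ 0 := by rcases hsgn' with ⟨h1, h2⟩ | ⟨h1, h2⟩ <;> omega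
        refine Or.inr ⟨x₁-1, y, x₂, hy, mul_nonneg_iff.mpr (Or.inr ⟨by omega, hx.2⟩), ?_⟩
        rw [← consAinv hx.1]
        simp
      · rw [gt_mul, one_zero, Nm_el, cN1, hlen3] at h
        omega

/-- A word over A is geodesic iff it lies in the language
L = {aˣ} ∪ {aˣ t aʸ} ∪ {a^{x₁} t aʸ t a^{x₂} : y ≠ 0, x₁·x₂ ≥ 0}. -/
theorem geodesic_iff_mem_lang (w : List GG) (hw : IsWord w) :
    IsGeodesic w ↔ w ∈ GeodLang := by
  rw [geod_iff w hw]
  exact ⟨len_lang w hw, lang_len w⟩
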